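/- Let α ∈ (0,1). Then the function G(z) = 1 − (1 − H(z))^α is the generating function of a quasi-stationary distribution with eigenvalue m^α: there exist nonnegative reals ν(n), n ≥ 1, with ∑_{n≥1} ν(n) = 1, such that G(z) = ∑_{n≥1} ν(n)·zⁿ for all z ∈ [0,1], and the probability measure ν on ℕ* is m^α-invariant. -/

import Mathlib

open MeasureTheory Real Set Filter

section SibuyaCoefficients



noncomputable def sibRho (α : ℝ) (N : ℕ) : ℝ := ∏ k ∈ Finset.range N, (1 - α / (k + 1))

noncomputable def sib (α : ℝ) : ℕ → ℝ
  | 0 => 0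
  | n + 1 => α * sibRho α n / (n + 1)

variable {α : ℝ}

lemma sibRho_pos (h0 : 0 < α) (h1 : α < 1) (N : ℕ) : 0 < sibRho α N := by
  refine Finset.prod_pos fun k _ => ?_
  have hk : (1 : ℝ) ≤ (k : ℝ) + 1 := by
    have : (0:ℝ) ≤ (k:ℝ) := Nat.cast_nonneg k
    linarith
  have : α / ((k : ℝ) + 1) ≤ α / 1 := by
    apply div_le_div_of_nonneg_left h0.le one_pos hk
  simp at this
  linarith

lemma sibRho_le_one (h0 : 0 < α) (h1 : α < 1) (N : ℕ) : sibRho α N ≤ 1 := by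
  refine Finset.prod_le_one (fun k _ => ?_) (fun k _ => ?_)
  · have hk : (1 : ℝ) ≤ (k : ℝ) + 1 := by
      have : (0:ℝ) ≤ (k:ℝ) := Nat.cast_nonneg k
      linarith
    have : α / ((k : ℝ) + 1) ≤ α / 1 := div_le_div_of_nonneg_left h0.le one_pos hk
    simp at this; linarith
  · have : 0 ≤ α / ((k : ℝ) + 1) := by positivity
    linarith

lemma sibRho_succ (N : ℕ) : sibRho α (N + 1) = sibRho α N * (1 - α / (N + 1)) :=
  Finset.prod_range_succ _ _

lemma sib_succ_eq (n : ℕ) : sib α (n + 1) = sibRho α n - sibRho α (n + 1) := by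
  rw [sibRho_succ]
  show α * sibRho α n / (n + 1) = _
  have : ((n : ℝ) + 1) ≠ 0 := by positivity
  field_simp
  ring

lemma sib_nonneg (h0 : 0 < α) (h1 : α < 1) (n : ℕ) : 0 ≤ sib α n := by
  cases n with
  | zero => exact le_refl 0
  | succ n =>
    show 0 ≤ α * sibRho α n / (n + 1)
    have := sibRho_pos h0 h1 n
    positivity

lemma sib_le_one (h0 : 0 < α) (h1 : α < 1) (n : ℕ) : sib α n ≤ 1 := by
  cases n with
  | zero => exact zero_le_one
  | succ n =>
    show α * sibRho α n / (n + 1) ≤ 1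
    rw [div_le_one (by positivity)]
    have h2 := sibRho_le_one h0 h1 n
    have h3 := sibRho_pos h0 h1 n
    nlinarith

lemma sib_sum_range (h0 : 0 < α) (h1 : α < 1) (N : ℕ) :
    ∑ n ∈ Finset.range (N + 1), sib α n = 1 - sibRho α N := by
  induction N with
  | zero => simp [sib, sibRho]
  | succ N ih =>
    rw [Finset.sum_range_succ, ih, sib_succ_eq]
    ring

lemma sibRho_tendsto_zero (h0 : 0 < α) (h1 : α < 1) :
    Tendsto (sibRho α) atTop (nhds 0) := by
  have hbound : ∀ N, sibRho α N ≤ Real.exp (-α * ∑ k ∈ Finset.range N, (1 : ℝ) / (k + 1)) := by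
    intro N
    have : sibRho α N ≤ ∏ k ∈ Finset.range N, Real.exp (-(α / (k + 1))) := by
      refine Finset.prod_le_prod (fun k _ => ?_) (fun k _ => ?_)
      · have hk : (1 : ℝ) ≤ (k : ℝ) + 1 := by
          have : (0:ℝ) ≤ (k:ℝ) := Nat.cast_nonneg k
          linarith
        have : α / ((k : ℝ) + 1) ≤ α / 1 := div_le_div_of_nonneg_left h0.le one_pos hk
        simp at this; linarith
      · have := Real.add_one_le_exp (-(α / (k + 1)))
        linarith
    rw [← Real.exp_sum] at this
    convert this using 3
    rw [Finset.mul_sum]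
    congr 1
    ext k
    ring
  have hs : Tendsto (fun N => ∑ k ∈ Finset.range N, (1 : ℝ) / (k + 1)) atTop atTop := by
    exact_mod_cast tendsto_sum_range_one_div_nat_succ_atTop
  have hexp : Tendsto (fun N => Real.exp (-α * ∑ k ∈ Finset.range N, (1 : ℝ) / (k + 1)))
      atTop (nhds 0) := by
    apply Real.tendsto_exp_atBot.comp
    have := hs.const_mul_atTop h0
    have h2 : Tendsto (fun N => -(α * ∑ k ∈ Finset.range N, (1 : ℝ) / (k + 1))) atTop atBot :=
      tendsto_neg_atBot_iff.mpr this
    convert h2 using 2 with N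
    ring
  exact squeeze_zero (fun N => (sibRho_pos h0 h1 N).le) hbound hexp

lemma summable_sib (h0 : 0 < α) (h1 : α < 1) : Summable (sib α) := by
  apply summable_of_sum_range_le (c := 1) (sib_nonneg h0 h1)
  intro n
  cases n with
  | zero => simp
  | succ N =>
    rw [sib_sum_range h0 h1]
    have := sibRho_pos h0 h1 N
    linarith

lemma hasSum_sib (h0 : 0 < α) (h1 : α < 1) : HasSum (sib α) 1 := by
  have hsum := summable_sib h0 h1
  have h2 := hsum.hasSum.tendsto_sum_nat
  have h3 : Tendsto (fun N => ∑ n ∈ Finset.range N, sib α n) atTop (nhds 1) := by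
    rw [← tendsto_add_atTop_iff_nat 1]
    simp only [sib_sum_range h0 h1]
    have := (sibRho_tendsto_zero h0 h1).const_sub 1
    simpa using this
  have heq : (∑' n, sib α n) = 1 := tendsto_nhds_unique h2 h3
  have h4 := hsum.hasSum
  rwa [heq] at h4

lemma sib_zero : sib α 0 = 0 := rfl
lemma sib_succ (n : ℕ) : sib α (n + 1) = α * sibRho α n / (n + 1) := rfl


lemma aux_summable_n1 {r : ℝ} (hr0 : 0 ≤ r) (hr1 : r < 1) :
    Summable (fun n : ℕ => ((n : ℝ) + 1) * r ^ n) := by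
  have h1 : Summable (fun n : ℕ => (n : ℝ) ^ 1 * r ^ n) :=
    summable_pow_mul_geometric_of_norm_lt_one 1 (by rwa [Real.norm_eq_abs, abs_of_nonneg hr0])
  have h2 : Summable (fun n : ℕ => r ^ n) := summable_geometric_of_lt_one hr0 hr1
  have := h1.add h2
  convert this using 2 with n
  ring

lemma aux_summable_nr {r : ℝ} (hr0 : 0 ≤ r) (hr1 : r < 1) :
    Summable (fun n : ℕ => (n : ℝ) * r ^ (n - 1)) := by
  rw [← summable_nat_add_iff 1]
  simp only [Nat.add_sub_cancel]
  have := aux_summable_n1 hr0 hr1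
  refine this.congr fun n => ?_
  push_cast
  ring

lemma sib_summable_term (h0 : 0 < α) (h1 : α < 1) {y : ℝ} (hy : |y| ≤ 1) :
    Summable (fun n => sib α n * y ^ n) := by
  refine (summable_sib h0 h1).of_norm_bounded fun n => ?_
  rw [norm_mul, norm_pow, Real.norm_eq_abs, Real.norm_eq_abs, abs_of_nonneg (sib_nonneg h0 h1 n)]
  have h2 : |y| ^ n ≤ 1 := pow_le_one₀ (abs_nonneg y) hy
  nlinarith [sib_nonneg h0 h1 n]

lemma sib_summable_deriv (h0 : 0 < α) (h1 : α < 1) {y : ℝ} (hy : |y| < 1) :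
    Summable (fun n => sib α n * ((n : ℝ) * y ^ (n - 1))) := by
  refine (aux_summable_nr (abs_nonneg y) hy).of_norm_bounded fun n => ?_
  have e1 : ‖sib α n * ((n : ℝ) * y ^ (n - 1))‖ = sib α n * ((n : ℝ) * |y| ^ (n - 1)) := by
    rw [Real.norm_eq_abs, abs_mul, abs_mul, abs_pow, abs_of_nonneg (sib_nonneg h0 h1 n),
      Nat.abs_cast]
  rw [e1]
  have h2 : sib α n ≤ 1 := sib_le_one h0 h1 n
  have h3 : (0:ℝ) ≤ (n : ℝ) * |y| ^ (n - 1) := by positivity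
  nlinarith [sib_nonneg h0 h1 n]

lemma sib_summable_d (h0 : 0 < α) (h1 : α < 1) {y : ℝ} (hy : |y| < 1) :
    Summable (fun n : ℕ => ((n : ℝ) + 1) * sib α (n + 1) * y ^ n) := by
  refine (aux_summable_n1 (abs_nonneg y) hy).of_norm_bounded fun n => ?_
  have e1 : ‖((n : ℝ) + 1) * sib α (n + 1) * y ^ n‖ = ((n : ℝ) + 1) * sib α (n + 1) * |y| ^ n := by
    rw [Real.norm_eq_abs, abs_mul, abs_mul, abs_pow,
      abs_of_nonneg (show (0:ℝ) ≤ (n : ℝ) + 1 by positivity),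
      abs_of_nonneg (sib_nonneg h0 h1 (n + 1))]
  rw [e1]
  have h2 : sib α (n + 1) ≤ 1 := sib_le_one h0 h1 (n + 1)
  have h5 := mul_le_mul_of_nonneg_right
    (mul_le_mul_of_nonneg_left h2 (show (0:ℝ) ≤ (n : ℝ) + 1 by positivity))
    (pow_nonneg (abs_nonneg y) n)
  simpa using h5

set_option maxHeartbeats 1000000 in
lemma sib_ode (h0 : 0 < α) (h1 : α < 1) {y : ℝ} (hy : |y| < 1) :
    (1 - y) * ∑' n, sib α n * ((n : ℝ) * y ^ (n - 1)) = α * (1 - ∑' n, sib α n * y ^ n) := by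
  set d : ℕ → ℝ := fun n => ((n : ℝ) + 1) * sib α (n + 1) with hd
  have hd_eq : ∀ n, d n = α * sibRho α n := by
    intro n
    have hne : ((n : ℝ) + 1) ≠ 0 := by positivity
    rw [hd]
    simp only [sib_succ]
    field_simp
  have hrec : ∀ n, d (n + 1) = d n - α * sib α (n + 1) := by
    intro n
    rw [hd_eq, hd_eq, sib_succ_eq]
    push_cast
    ring
  have Sd : Summable (fun n => d n * y ^ n) := sib_summable_d h0 h1 hy
  have S0 : Summable (fun n => sib α n * y ^ n) := sib_summable_term h0 h1 hy.le
  have ST : Summable (fun n => sib α n * ((n : ℝ) * y ^ (n - 1))) := sib_summable_deriv h0 h1 hy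
  -- T = sum of derivative series equals sum of d series
  have hT : ∑' n, sib α n * ((n : ℝ) * y ^ (n - 1)) = ∑' n, d n * y ^ n := by
    rw [Summable.tsum_eq_zero_add ST]
    simp only [sib_zero, Nat.cast_zero, zero_mul, mul_zero, zero_add, Nat.add_sub_cancel]
    apply tsum_congr
    intro n
    rw [hd]
    push_cast
    ring
  have hE : ∑' n, sib α n * y ^ n = ∑' n, sib α (n + 1) * y ^ (n + 1) := by
    rw [Summable.tsum_eq_zero_add S0]
    simp [sib_zero]
  have Sshift : Summable (fun n => sib α (n + 1) * y ^ (n + 1)) := (summable_nat_add_iff 1).2 S0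
  have Sdy : Summable (fun n => d n * y ^ (n + 1)) := by
    have := Sd.mul_right y
    refine this.congr fun n => ?_
    rw [pow_succ]
    ring
  have hdy : ∑' n, d n * y ^ (n + 1) = y * ∑' n, d n * y ^ n := by
    rw [← tsum_mul_left]
    apply tsum_congr
    intro n
    rw [pow_succ]
    ring
  have hshift : ∑' n, d (n + 1) * y ^ (n + 1)
      = y * ∑' n, d n * y ^ n - α * ∑' n, sib α n * y ^ n := by
    have hterm : ∀ n, d (n + 1) * y ^ (n + 1)
        = d n * y ^ (n + 1) - α * (sib α (n + 1) * y ^ (n + 1)) := by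
      intro n
      rw [hrec]
      ring
    calc ∑' n, d (n + 1) * y ^ (n + 1)
        = ∑' n, (d n * y ^ (n + 1) - α * (sib α (n + 1) * y ^ (n + 1))) := tsum_congr hterm
      _ = ∑' n, d n * y ^ (n + 1) - α * ∑' n, sib α (n + 1) * y ^ (n + 1) := by
          rw [(Sdy.hasSum.sub ((Sshift.mul_left α).hasSum)).tsum_eq, tsum_mul_left]
      _ = y * ∑' n, d n * y ^ n - α * ∑' n, sib α n * y ^ n := by rw [hdy, ← hE]
  have hsplit : ∑' n, d n * y ^ n = d 0 * y ^ 0 + ∑' n, d (n + 1) * y ^ (n + 1) :=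
    Summable.tsum_eq_zero_add Sd
  rw [hshift] at hsplit
  simp only [pow_zero, mul_one] at hsplit
  have hd0 : d 0 = α := by
    rw [hd_eq]
    have : sibRho α 0 = 1 := by simp [sibRho]
    rw [this, mul_one]
  rw [hd0] at hsplit
  rw [hT]
  linarith [hsplit]

lemma sib_tsum_eq (h0 : 0 < α) (h1 : α < 1) {x : ℝ} (hx0 : 0 ≤ x) (hx1 : x < 1) :
    ∑' n, sib α n * x ^ n = 1 - (1 - x) ^ α := by
  set r : ℝ := (1 + x) / 2 with hr
  have hr0 : 0 < r := by rw [hr]; linarith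
  have hr1 : r < 1 := by rw [hr]; linarith
  have hxr : x < r := by rw [hr]; linarith
  set t : Set ℝ := Set.Ioo (-r) r with ht
  have ht_open : IsOpen t := isOpen_Ioo
  have ht_conn : IsPreconnected t := (convex_Ioo _ _).isPreconnected
  have habs : ∀ y ∈ t, |y| < r := fun y hy => abs_lt.2 ⟨hy.1, hy.2⟩
  have habs1 : ∀ y ∈ t, |y| < 1 := fun y hy => lt_trans (habs y hy) hr1
  -- derivative of the sum
  have hderiv : ∀ y ∈ t, HasDerivAt (fun z => ∑' n, sib α n * z ^ n)
      (∑' n, sib α n * ((n : ℝ) * y ^ (n - 1))) y := by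
    intro y hy
    refine hasDerivAt_tsum_of_isPreconnected (aux_summable_nr hr0.le hr1) ht_open ht_conn
      (g := fun n z => sib α n * z ^ n) (g' := fun n z => sib α n * ((n : ℝ) * z ^ (n - 1)))
      (fun n z hz => (hasDerivAt_pow n z).const_mul (sib α n)) (fun n z hz => ?_)
      (show (0:ℝ) ∈ t from ⟨by linarith, hr0⟩) ?_ hy
    · have e1 : ‖sib α n * ((n : ℝ) * z ^ (n - 1))‖ = sib α n * ((n : ℝ) * |z| ^ (n - 1)) := by
        rw [Real.norm_eq_abs, abs_mul, abs_mul, abs_pow, abs_of_nonneg (sib_nonneg h0 h1 n),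
          Nat.abs_cast]
      rw [e1]
      have h2 : |z| ^ (n - 1) ≤ r ^ (n - 1) := pow_le_pow_left₀ (abs_nonneg z) (habs z hz).le _
      have h3 : sib α n * ((n : ℝ) * |z| ^ (n - 1)) ≤ 1 * ((n : ℝ) * r ^ (n - 1)) := by
        apply mul_le_mul (sib_le_one h0 h1 n) _ (by positivity) zero_le_one
        apply mul_le_mul_of_nonneg_left h2 (Nat.cast_nonneg n)
      simpa using h3
    · exact sib_summable_term h0 h1 (by simp : |(0:ℝ)| ≤ 1)
  -- Φ has zero derivative on t
  set Φ : ℝ → ℝ := fun y => (1 - ∑' n, sib α n * y ^ n) * (1 - y) ^ (-α) with hΦ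
  have hΦderiv : ∀ y ∈ t, HasDerivAt Φ 0 y := by
    intro y hy
    have h1y : 0 < 1 - y := by have := (habs1 y hy); rw [abs_lt] at this; linarith
    have hpow : HasDerivAt (fun y : ℝ => (1 - y) ^ (-α)) (α * (1 - y) ^ (-α - 1)) y := by
      have hbase : HasDerivAt (fun y : ℝ => 1 - y) (-1) y := (hasDerivAt_id y).const_sub 1
      have hrpow := Real.hasDerivAt_rpow_const (x := 1 - y) (p := -α) (Or.inl h1y.ne')
      have := hrpow.comp y hbase
      exact this.congr_deriv (by ring)
    have hsum : HasDerivAt (fun y : ℝ => 1 - ∑' n, sib α n * y ^ n)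
        (-(∑' n, sib α n * ((n : ℝ) * y ^ (n - 1)))) y := (hderiv y hy).const_sub 1
    have hprod := hsum.mul hpow
    have hode := sib_ode h0 h1 (habs1 y hy)
    have hsplit : (1 - y) ^ (-α) = (1 - y) * (1 - y) ^ (-α - 1) := by
      have h := Real.rpow_add h1y 1 (-α - 1)
      rw [Real.rpow_one] at h
      rw [show (1:ℝ) + (-α - 1) = -α by ring] at h
      exact h
    exact hprod.congr_deriv (by
      rw [hsplit]
      linear_combination (-(1 - y) ^ (-α - 1)) * hode)
  -- Φ is constant on t
  have hconst : ∀ y ∈ t, Φ y = Φ 0 := by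
    intro y hy
    have h0t : (0:ℝ) ∈ t := ⟨by linarith, hr0⟩
    have hmvt := (convex_Ioo (-r) r).norm_image_sub_le_of_norm_hasFDerivWithin_le
      (f := Φ) (f' := fun _ => (0 : ℝ →L[ℝ] ℝ)) (C := 0)
      (fun z hz => by
        have := (hΦderiv z hz).hasFDerivAt.hasFDerivWithinAt (s := t)
        exact this.congr_fderiv (by ext w; simp))
      (fun z _ => by simp) h0t hy
    have h2 : Φ y - Φ 0 = 0 := by
      have h3 : ‖Φ y - Φ 0‖ = 0 :=
        le_antisymm (by simpa using hmvt) (norm_nonneg _)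
      exact norm_eq_zero.mp h3
    linarith
  -- evaluate
  have hΦ0 : Φ 0 = 1 := by
    rw [hΦ]
    have hE0 : ∑' n, sib α n * (0:ℝ) ^ n = 0 := by
      rw [tsum_eq_single 0 (fun n hn => by simp [zero_pow hn])]
      simp [sib]
    simp [hE0]
  have hxt : x ∈ t := ⟨by linarith, hxr⟩
  have hx' : Φ x = 1 := (hconst x hxt).trans hΦ0
  rw [hΦ] at hx'
  have h1x : 0 < 1 - x := by linarith
  have hmul : (1 - x) ^ (-α) * (1 - x) ^ (α : ℝ) = 1 := by
    rw [← Real.rpow_add h1x]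
    simp
  have := congrArg (fun u => u * (1 - x) ^ (α : ℝ)) hx'
  simp only [mul_assoc, hmul, mul_one, one_mul] at this
  linarith

lemma sib_hasSum_rpow (h0 : 0 < α) (h1 : α < 1) {x : ℝ} (hx : x ∈ Set.Icc (0:ℝ) 1) :
    HasSum (fun n => sib α n * x ^ n) (1 - (1 - x) ^ α) := by
  have hs : Summable (fun n => sib α n * x ^ n) :=
    sib_summable_term h0 h1 (by rw [abs_of_nonneg hx.1]; exact hx.2)
  rcases lt_or_eq_of_le hx.2 with hlt | heq
  · exact hs.hasSum_iff.mpr (sib_tsum_eq h0 h1 hx.1 hlt)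
  · subst heq
    have : (1 - (1:ℝ)) ^ α = 0 := by
      rw [sub_self, Real.zero_rpow h0.ne']
    rw [this]
    simpa using hasSum_sib h0 h1

end SibuyaCoefficients

/-- `convPow q i j` is the `i`-fold convolution power of the offspring distribution `q`
evaluated at `j`, i.e. the transition matrix `P₀(i,j)` of the BGW process. -/
noncomputable def convPow (q : ℕ → ℝ) : ℕ → ℕ → ℝ
  | 0, j => if j = 0 then 1 else 0
  | i + 1, j => ∑ k ∈ Finset.range (j + 1), convPow q i (j - k) * q k

/-- `ν` is a `lam`-invariant measure on `ℕ* = {1,2,…}` of the BGW process killed at 0. -/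
def IsInvMeasure (q : ℕ → ℝ) (lam : ℝ) (ν : ℕ → ℝ) : Prop :=
  (∀ n, 0 ≤ ν n) ∧ ν 0 = 0 ∧
  ∀ j : ℕ, 1 ≤ j →
    Summable (fun i => ν i * convPow q i j) ∧
    ∑' i, ν i * convPow q i j = lam * ν j

section ConvPow

variable {q : ℕ → ℝ}

lemma convPow_nonneg (hq0 : ∀ k, 0 ≤ q k) : ∀ i j, 0 ≤ convPow q i j := by
  intro i
  induction i with
  | zero => intro j; simp only [convPow]; split <;> norm_num
  | succ i ih =>
    intro j
    show 0 ≤ ∑ k ∈ Finset.range (j + 1), convPow q i (j - k) * q k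
    exact Finset.sum_nonneg fun k _ => mul_nonneg (ih _) (hq0 k)

lemma convPow_zero_eq (hν0 : q 0 = 0) (i : ℕ) (hi : 1 ≤ i) : convPow q i 0 = 0 := by
  cases i with
  | zero => omega
  | succ i =>
    show (∑ k ∈ Finset.range (0 + 1), convPow q i (0 - k) * q k) = 0
    simp [hν0]

lemma coeff_summable (hq0 : ∀ k, 0 ≤ q k) (hq1 : Summable q) {z : ℝ} (hz0 : 0 ≤ z)
    (hz1 : z ≤ 1) : Summable (fun k => q k * z ^ k) := by
  refine hq1.of_nonneg_of_le (fun k => mul_nonneg (hq0 k) (pow_nonneg hz0 k)) (fun k => ?_)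
  have : z ^ k ≤ 1 := pow_le_one₀ hz0 hz1
  nlinarith [hq0 k]

lemma convPow_hasSum (hq0 : ∀ k, 0 ≤ q k) (hq1 : HasSum q 1) {z : ℝ}
    (hz : z ∈ Set.Icc (0:ℝ) 1) (i : ℕ) :
    HasSum (fun j => convPow q i j * z ^ j) ((∑' k, q k * z ^ k) ^ i) := by
  induction i with
  | zero =>
    have he : (fun j => convPow q 0 j * z ^ j) = fun j => if j = 0 then (1:ℝ) else 0 := by
      funext j
      show (if j = 0 then (1:ℝ) else 0) * z ^ j = _
      split <;> simp_all
    rw [he, pow_zero]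
    exact hasSum_ite_eq 0 1
  | succ i ih =>
    have hf : Summable (fun k => ‖q k * z ^ k‖) := by
      rw [summable_norm_iff]
      exact coeff_summable hq0 hq1.summable hz.1 hz.2
    have hg : Summable (fun j => ‖convPow q i j * z ^ j‖) := by
      rw [summable_norm_iff]
      exact ih.summable
    have hterm : ∀ n, ∑ k ∈ Finset.range (n + 1), (q k * z ^ k) *
        (convPow q i (n - k) * z ^ (n - k)) = convPow q (i + 1) n * z ^ n := by
      intro n
      show _ = (∑ k ∈ Finset.range (n + 1), convPow q i (n - k) * q k) * z ^ n
      rw [Finset.sum_mul]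
      apply Finset.sum_congr rfl
      intro k hk
      have hk' : k ≤ n := Nat.lt_succ_iff.mp (Finset.mem_range.mp hk)
      rw [← pow_sub_mul_pow z hk']
      ring
    have hS : Summable (fun n => convPow q (i + 1) n * z ^ n) :=
      ((summable_norm_sum_mul_range_of_summable_norm hf hg).of_norm).congr hterm
    have hkey := tsum_mul_tsum_eq_tsum_sum_range_of_summable_norm hf hg
    refine hS.hasSum_iff.mpr ?_
    calc ∑' n, convPow q (i + 1) n * z ^ n
        = ∑' n, ∑ k ∈ Finset.range (n + 1), (q k * z ^ k) * (convPow q i (n - k) * z ^ (n - k)) :=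
          tsum_congr fun n => (hterm n).symm
      _ = (∑' k, q k * z ^ k) * ∑' j, convPow q i j * z ^ j := hkey.symm
      _ = (∑' k, q k * z ^ k) ^ (i + 1) := by rw [ih.tsum_eq, ← pow_succ']

set_option maxHeartbeats 1000000 in
/-- coefficients of a nonnegative power series on (0,1) are unique -/
lemma coeff_unique {a b : ℕ → ℝ} (ha : ∀ n, 0 ≤ a n) (hb : ∀ n, 0 ≤ b n)
    (hsa : Summable a) (hsb : Summable b)
    (h : ∀ z : ℝ, z ∈ Set.Ioo (0:ℝ) 1 → ∑' n, a n * z ^ n = ∑' n, b n * z ^ n) :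
    a = b := by
  have key : ∀ j : ℕ, (∀ n, n < j → a n = b n) → a j = b j := by
    intro j ih
    set C : ℝ := ∑' n, a n + ∑' n, b n with hC
    have hC0 : 0 ≤ C := by
      have : 0 ≤ ∑' n, a n := tsum_nonneg ha
      have : 0 ≤ ∑' n, b n := tsum_nonneg hb
      linarith
    have hbound : ∀ z : ℝ, z ∈ Set.Ioo (0:ℝ) 1 → |a j - b j| ≤ z * C := by
      intro z hz
      have hz0 := hz.1
      have hz1 := hz.2
      have hsaz : Summable (fun n => a n * z ^ n) :=
        coeff_summable ha hsa hz0.le hz1.le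
      have hsbz : Summable (fun n => b n * z ^ n) :=
        coeff_summable hb hsb hz0.le hz1.le
      have hsplit_a := (Summable.sum_add_tsum_nat_add (j + 1) hsaz).symm
      have hsplit_b := (Summable.sum_add_tsum_nat_add (j + 1) hsbz).symm
      -- tail bounds
      have htail : ∀ (c : ℕ → ℝ), (∀ n, 0 ≤ c n) → Summable c →
          ∑' n, c (n + (j + 1)) * z ^ (n + (j + 1)) ≤ z ^ (j + 1) * ∑' n, c n := by
        intro c hc hsc
        have hsz : Summable (fun n => c (n + (j + 1)) * z ^ (n + (j + 1))) :=
          ((summable_nat_add_iff (j+1)).2 (coeff_summable hc hsc hz0.le hz1.le))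
        have h1 : ∑' n, c (n + (j + 1)) * z ^ (n + (j + 1))
            ≤ ∑' n, c (n + (j + 1)) * z ^ (j + 1) := by
          apply Summable.tsum_le_tsum _ hsz (((summable_nat_add_iff (j+1)).2 hsc).mul_right _)
          intro n
          have h2 : z ^ (n + (j + 1)) ≤ z ^ (j + 1) :=
            pow_le_pow_of_le_one hz0.le hz1.le (by omega)
          nlinarith [hc (n + (j + 1))]
        have h3 : ∑' n, c (n + (j + 1)) * z ^ (j + 1) = z ^ (j + 1) * ∑' n, c (n + (j + 1)) := by
          rw [← tsum_mul_left]
          exact tsum_congr fun n => by ring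
        have h4 : ∑' n, c (n + (j + 1)) ≤ ∑' n, c n := by
          have h5 := (Summable.sum_add_tsum_nat_add (j + 1) hsc).symm
          have h6 : 0 ≤ ∑ i ∈ Finset.range (j + 1), c i := Finset.sum_nonneg fun i _ => hc i
          linarith
        calc ∑' n, c (n + (j + 1)) * z ^ (n + (j + 1)) ≤ z ^ (j + 1) * ∑' n, c (n + (j + 1)) := by
              rw [← h3]; exact h1
          _ ≤ z ^ (j + 1) * ∑' n, c n := by
              apply mul_le_mul_of_nonneg_left h4 (by positivity)
        -- done
      have hta := htail a ha hsa
      have htb := htail b hb hsb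
      have hta0 : 0 ≤ ∑' n, a (n + (j + 1)) * z ^ (n + (j + 1)) :=
        tsum_nonneg fun n => mul_nonneg (ha _) (pow_nonneg hz0.le _)
      have htb0 : 0 ≤ ∑' n, b (n + (j + 1)) * z ^ (n + (j + 1)) :=
        tsum_nonneg fun n => mul_nonneg (hb _) (pow_nonneg hz0.le _)
      -- finite parts agree except at j
      have hfin : ∑ n ∈ Finset.range (j + 1), a n * z ^ n
          = (∑ n ∈ Finset.range j, a n * z ^ n) + a j * z ^ j := Finset.sum_range_succ _ _
      have hfin' : ∑ n ∈ Finset.range (j + 1), b n * z ^ n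
          = (∑ n ∈ Finset.range j, b n * z ^ n) + b j * z ^ j := Finset.sum_range_succ _ _
      have hsame : ∑ n ∈ Finset.range j, a n * z ^ n = ∑ n ∈ Finset.range j, b n * z ^ n :=
        Finset.sum_congr rfl fun n hn => by rw [ih n (Finset.mem_range.mp hn)]
      have heq := h z hz
      rw [hsplit_a, hsplit_b, hfin, hfin', hsame] at heq
      -- |a j - b j| * z^j ≤ z^(j+1) * C
      have hzj : 0 < z ^ j := pow_pos hz0 j
      have hmain : |a j - b j| * z ^ j ≤ z ^ (j + 1) * C := by
        have hab : (a j - b j) * z ^ j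
            = (∑' n, b (n + (j + 1)) * z ^ (n + (j + 1)))
              - (∑' n, a (n + (j + 1)) * z ^ (n + (j + 1))) := by
          rw [sub_mul]
          linarith
        have hCa : z ^ (j + 1) * ∑' n, a n ≤ z ^ (j + 1) * C := by
          apply mul_le_mul_of_nonneg_left _ (by positivity)
          have : 0 ≤ ∑' n, a n := tsum_nonneg ha
          have : 0 ≤ ∑' n, b n := tsum_nonneg hb
          rw [hC]; linarith
        have hCb : z ^ (j + 1) * ∑' n, b n ≤ z ^ (j + 1) * C := by
          apply mul_le_mul_of_nonneg_left _ (by positivity)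
          have : 0 ≤ ∑' n, a n := tsum_nonneg ha
          have : 0 ≤ ∑' n, b n := tsum_nonneg hb
          rw [hC]; linarith
        have habs : |(a j - b j) * z ^ j| ≤ z ^ (j + 1) * C := by
          rw [abs_le]
          constructor
          · rw [hab]; linarith
          · rw [hab]; linarith
        rw [abs_mul, abs_of_nonneg hzj.le] at habs
        exact habs
      have hzsucc : z ^ (j + 1) = z * z ^ j := by rw [pow_succ]; ring
      rw [hzsucc, mul_assoc] at hmain
      have hmain' : |a j - b j| * z ^ j ≤ (z * C) * z ^ j := by
        calc |a j - b j| * z ^ j ≤ z * (z ^ j * C) := hmain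
          _ = (z * C) * z ^ j := by ring
      exact le_of_mul_le_mul_right hmain' hzj
    -- conclude a j = b j
    by_contra hne
    have hε : 0 < |a j - b j| := abs_pos.2 (sub_ne_zero.2 hne)
    set z : ℝ := min (1/2 : ℝ) (|a j - b j| / (2 * (C + 1))) with hzdef
    have hz0 : 0 < z := lt_min (by norm_num) (by positivity)
    have hz1 : z < 1 := lt_of_le_of_lt (min_le_left _ _) (by norm_num)
    have hbz := hbound z ⟨hz0, hz1⟩
    have h2 : z ≤ |a j - b j| / (2 * (C + 1)) := min_le_right _ _
    have h3 : z * C ≤ (|a j - b j| / (2 * (C + 1))) * C := mul_le_mul_of_nonneg_right h2 hC0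
    rw [div_mul_eq_mul_div] at h3
    have h4 : |a j - b j| * C / (2 * (C + 1)) < |a j - b j| := by
      rw [div_lt_iff₀ (by positivity)]
      nlinarith [hε, hC0]
    exact absurd (lt_of_le_of_lt (hbz.trans h3) h4) (lt_irrefl _)
  funext j
  exact Nat.strongRecOn j key

lemma tonelli_mass_kernel {μ : ℕ → ℝ} {K : ℕ → ℕ → ℝ} {z : ℝ} {g : ℕ → ℝ} {S : ℝ}
    (hμ0 : ∀ k, 0 ≤ μ k) (hK0 : ∀ k n, 0 ≤ K k n) (hz0 : 0 ≤ z)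
    (hrow : ∀ k, HasSum (fun n => K k n * z ^ n) (g k))
    (htot : HasSum (fun k => μ k * g k) S) :
    (∀ n, Summable fun k => μ k * K k n * z ^ n) ∧
    HasSum (fun n => (∑' k, μ k * K k n) * z ^ n) S := by
  set F : ℕ × ℕ → ℝ := fun p => μ p.1 * K p.1 p.2 * z ^ p.2 with hF
  have h0 : ∀ p, 0 ≤ F p := fun p =>
    mul_nonneg (mul_nonneg (hμ0 _) (hK0 _ _)) (pow_nonneg hz0 _)
  have hrows : ∀ k, Summable fun n => F (k, n) := by
    intro k
    exact (((hrow k).summable.mul_left (μ k)).congr (fun n => by rw [hF]; ring))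
  have hrowsum : ∀ k, ∑' n, F (k, n) = μ k * g k := by
    intro k
    have : ∑' n, F (k, n) = ∑' n, μ k * (K k n * z ^ n) := tsum_congr fun n => by rw [hF]; ring
    rw [this, tsum_mul_left, (hrow k).tsum_eq]
  have hFs : Summable F := by
    rw [summable_prod_of_nonneg h0]
    refine ⟨hrows, ?_⟩
    have : (fun k => ∑' n, F (k, n)) = fun k => μ k * g k := funext hrowsum
    rw [this]
    exact htot.summable
  have hswap : Summable (F ∘ (Equiv.prodComm ℕ ℕ)) := (Equiv.prodComm ℕ ℕ).summable_iff.mpr hFs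
  have h0' : ∀ p : ℕ × ℕ, 0 ≤ (F ∘ (Equiv.prodComm ℕ ℕ)) p := fun p => h0 _
  obtain ⟨hcols, hmarg⟩ := (summable_prod_of_nonneg h0').mp hswap
  have hcols' : ∀ n, Summable fun k => μ k * K k n * z ^ n := fun n => hcols n
  refine ⟨hcols', ?_⟩
  have hcolsum : ∀ n, ∑' k, F (k, n) = (∑' k, μ k * K k n) * z ^ n := by
    intro n
    rw [← tsum_mul_right]
  have hmarg' : Summable (fun n => (∑' k, μ k * K k n) * z ^ n) := by
    refine hmarg.congr fun n => ?_
    simp only [Function.comp_apply, Equiv.prodComm_apply, Prod.swap]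
    exact hcolsum n
  refine hmarg'.hasSum_iff.mpr ?_
  have e1 : ∑' n, (∑' k, μ k * K k n) * z ^ n = ∑' n, ∑' k, F (k, n) :=
    tsum_congr fun n => (hcolsum n).symm
  have e2 : ∑' n, ∑' k, F (k, n) = ∑' p, F p := by
    have h1 : ∑' (x : ℕ) (y : ℕ), (F ∘ (Equiv.prodComm ℕ ℕ)) (x, y)
        = ∑' p : ℕ × ℕ, (F ∘ (Equiv.prodComm ℕ ℕ)) p := (Summable.tsum_prod' hswap hcols).symm
    have h2 : ∑' p : ℕ × ℕ, (F ∘ (Equiv.prodComm ℕ ℕ)) p = ∑' p, F p :=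
      (Equiv.prodComm ℕ ℕ).tsum_eq F
    exact h1.trans h2
  have e3 : ∑' p, F p = ∑' k, ∑' n, F (k, n) := Summable.tsum_prod' hFs hrows
  have e4 : ∑' k, ∑' n, F (k, n) = S := by
    rw [tsum_congr hrowsum, htot.tsum_eq]
  rw [e1, e2, e3, e4]

end ConvPow

set_option maxHeartbeats 2000000 in
theorem seneta_vere_jones_qsd
    (q : ℕ → ℝ) (hq0 : ∀ k, 0 ≤ q k) (hq1 : HasSum q 1)
    (m : ℝ) (hm : HasSum (fun k : ℕ => (k : ℝ) * q k) m) (hm0 : 0 < m) (hm1 : m < 1)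
    (νmin : ℕ → ℝ) (hmin : IsInvMeasure q m νmin) (hmin1 : HasSum νmin 1)
    (α : ℝ) (hα : α ∈ Set.Ioo (0 : ℝ) 1) :
    ∃ ν : ℕ → ℝ, (∀ n, 0 ≤ ν n) ∧ ν 0 = 0 ∧ HasSum ν 1 ∧
      (∀ z ∈ Set.Icc (0 : ℝ) 1,
        HasSum (fun n => ν n * z ^ n) (1 - (1 - ∑' n, νmin n * z ^ n) ^ α)) ∧
      IsInvMeasure q (m ^ α) ν := by
  obtain ⟨hα0, hα1⟩ := hα
  obtain ⟨hν0, hν00, hνinv⟩ := hmin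
  have hνs : Summable νmin := hmin1.summable
  have hqs : Summable q := hq1.summable
  -- generating function of νmin maps [0,1] to [0,1]
  have hHmem : ∀ z : ℝ, z ∈ Set.Icc (0:ℝ) 1 → (∑' n, νmin n * z ^ n) ∈ Set.Icc (0:ℝ) 1 := by
    intro z hz
    constructor
    · exact tsum_nonneg fun n => mul_nonneg (hν0 n) (pow_nonneg hz.1 n)
    · have h1 : ∑' n, νmin n * z ^ n ≤ ∑' n, νmin n := by
        apply Summable.tsum_le_tsum _ (coeff_summable hν0 hνs hz.1 hz.2) hνs
        intro n
        have h2 : z ^ n ≤ 1 := pow_le_one₀ hz.1 hz.2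
        nlinarith [hν0 n]
      rw [hmin1.tsum_eq] at h1
      exact h1
  have hfmem : ∀ z : ℝ, z ∈ Set.Icc (0:ℝ) 1 → (∑' k, q k * z ^ k) ∈ Set.Icc (0:ℝ) 1 := by
    intro z hz
    constructor
    · exact tsum_nonneg fun n => mul_nonneg (hq0 n) (pow_nonneg hz.1 n)
    · have h1 : ∑' k, q k * z ^ k ≤ ∑' k, q k := by
        apply Summable.tsum_le_tsum _ (coeff_summable hq0 hqs hz.1 hz.2) hqs
        intro n
        have h2 : z ^ n ≤ 1 := pow_le_one₀ hz.1 hz.2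
        nlinarith [hq0 n]
      rw [hq1.tsum_eq] at h1
      exact h1
  have hH1 : (∑' n, νmin n * (1:ℝ) ^ n) = 1 := by
    have h : (∑' n, νmin n * (1:ℝ) ^ n) = ∑' n, νmin n :=
      tsum_congr fun n => by rw [one_pow, mul_one]
    rw [h, hmin1.tsum_eq]
  have hf1 : (∑' k, q k * (1:ℝ) ^ k) = 1 := by
    have h : (∑' k, q k * (1:ℝ) ^ k) = ∑' k, q k :=
      tsum_congr fun k => by rw [one_pow, mul_one]
    rw [h, hq1.tsum_eq]
  have h1Icc : (1:ℝ) ∈ Set.Icc (0:ℝ) 1 := ⟨zero_le_one, le_refl 1⟩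
  -- the candidate measure
  set ν : ℕ → ℝ := fun n => ∑' k, sib α k * convPow νmin k n with hνdef
  have hG : ∀ z : ℝ, z ∈ Set.Icc (0:ℝ) 1 →
      HasSum (fun n => ν n * z ^ n) (1 - (1 - ∑' n, νmin n * z ^ n) ^ α) := by
    intro z hz
    exact (tonelli_mass_kernel (sib_nonneg hα0 hα1) (convPow_nonneg hν0) hz.1
      (fun k => convPow_hasSum hν0 hmin1 hz k)
      (sib_hasSum_rpow hα0 hα1 (hHmem z hz))).2
  have hν0' : ∀ n, 0 ≤ ν n := fun n =>
    tsum_nonneg fun k => mul_nonneg (sib_nonneg hα0 hα1 k) (convPow_nonneg hν0 k n)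
  have hν00' : ν 0 = 0 := by
    have h : ∀ k, sib α k * convPow νmin k 0 = 0 := by
      intro k
      cases k with
      | zero => simp [sib]
      | succ k => rw [convPow_zero_eq hν00 (k+1) (Nat.succ_le_succ (Nat.zero_le k)), mul_zero]
    show (∑' k, sib α k * convPow νmin k 0) = 0
    rw [tsum_congr h]
    exact tsum_zero
  have hνsum1 : HasSum ν 1 := by
    have h := hG 1 h1Icc
    rw [hH1] at h
    have h2 : (1 : ℝ) - (1 - 1) ^ α = 1 := by
      rw [sub_self, Real.zero_rpow hα0.ne']
      ring
    rw [h2] at h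
    simpa using h
  -- the measure B j = ∑' i, νmin i * convPow q i j
  set B : ℕ → ℝ := fun j => ∑' i, νmin i * convPow q i j with hBdef
  have hBz : ∀ z : ℝ, z ∈ Set.Icc (0:ℝ) 1 →
      HasSum (fun j => B j * z ^ j) (∑' n, νmin n * (∑' k, q k * z ^ k) ^ n) := by
    intro z hz
    have htot : HasSum (fun i => νmin i * (∑' k, q k * z ^ k) ^ i)
        (∑' n, νmin n * (∑' k, q k * z ^ k) ^ n) :=
      (coeff_summable hν0 hνs (hfmem z hz).1 (hfmem z hz).2).hasSum
    exact (tonelli_mass_kernel hν0 (convPow_nonneg hq0) hz.1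
      (fun i => convPow_hasSum hq0 hq1 hz i) htot).2
  have hB1 : ∀ j : ℕ, 1 ≤ j → B j = m * νmin j := fun j hj => (hνinv j hj).2
  have hsplitB : ∀ z : ℝ, z ∈ Set.Icc (0:ℝ) 1 →
      (∑' n, νmin n * (∑' k, q k * z ^ k) ^ n) = B 0 + m * ∑' n, νmin n * z ^ n := by
    intro z hz
    have h2 := Summable.tsum_eq_zero_add (hBz z hz).summable
    rw [(hBz z hz).tsum_eq] at h2
    have h4 : ∑' j, B (j+1) * z ^ (j+1) = m * ∑' j, νmin (j+1) * z ^ (j+1) := by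
      rw [← tsum_mul_left]
      exact tsum_congr fun j => by
        rw [hB1 (j+1) (Nat.succ_le_succ (Nat.zero_le j))]
        ring
    have h5 : (∑' n, νmin n * z ^ n) = νmin 0 * z ^ 0 + ∑' j, νmin (j+1) * z ^ (j+1) :=
      Summable.tsum_eq_zero_add (coeff_summable hν0 hνs hz.1 hz.2)
    rw [hν00, zero_mul, zero_add] at h5
    rw [pow_zero, mul_one, h4, ← h5] at h2
    exact h2
  have hB0 : B 0 = 1 - m := by
    have h := hsplitB 1 h1Icc
    rw [hf1, hH1] at h
    linarith
  have hval : ∀ z : ℝ, z ∈ Set.Icc (0:ℝ) 1 →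
      1 - (1 - ∑' n, νmin n * (∑' k, q k * z ^ k) ^ n) ^ α
      = 1 - m ^ α * (1 - ∑' n, νmin n * z ^ n) ^ α := by
    intro z hz
    have h2 : 1 - (∑' n, νmin n * (∑' k, q k * z ^ k) ^ n)
        = m * (1 - ∑' n, νmin n * z ^ n) := by
      rw [hsplitB z hz, hB0]
      ring
    rw [h2, Real.mul_rpow hm0.le (by linarith [(hHmem z hz).2])]
  -- A j = ∑' i, ν i * convPow q i j
  set A : ℕ → ℝ := fun j => ∑' i, ν i * convPow q i j with hAdef
  have hstep6 : ∀ z : ℝ, z ∈ Set.Icc (0:ℝ) 1 →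
      (∀ j, Summable fun i => ν i * convPow q i j * z ^ j) ∧
      HasSum (fun j => A j * z ^ j)
        (1 - (1 - ∑' n, νmin n * (∑' k, q k * z ^ k) ^ n) ^ α) := by
    intro z hz
    exact tonelli_mass_kernel hν0' (convPow_nonneg hq0) hz.1
      (fun i => convPow_hasSum hq0 hq1 hz i) (hG _ (hfmem z hz))
  have hAsummable : ∀ j, Summable fun i => ν i * convPow q i j := by
    intro j
    have h := (hstep6 1 h1Icc).1 j
    simpa using h
  set b : ℕ → ℝ := fun j => (if j = 0 then 1 - m ^ α else 0) + m ^ α * ν j with hbdef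
  have hmα1 : m ^ α ≤ 1 := Real.rpow_le_one hm0.le hm1.le hα0.le
  have hmα0 : (0:ℝ) ≤ m ^ α := Real.rpow_nonneg hm0.le α
  have hbHasSum : ∀ z : ℝ, z ∈ Set.Icc (0:ℝ) 1 →
      HasSum (fun j => b j * z ^ j) (1 - m ^ α * (1 - ∑' n, νmin n * z ^ n) ^ α) := by
    intro z hz
    have h1 : HasSum (fun j => (if j = 0 then 1 - m ^ α else 0) * z ^ j) (1 - m ^ α) := by
      have he : (fun j : ℕ => (if j = 0 then 1 - m ^ α else 0) * z ^ j)
          = fun j => if j = 0 then 1 - m ^ α else 0 := by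
        funext j
        split <;> simp_all
      rw [he]
      exact hasSum_ite_eq 0 _
    have h2 := (hG z hz).mul_left (m ^ α)
    have h3 := h1.add h2
    have he2 : (fun j => (if j = 0 then 1 - m ^ α else 0) * z ^ j + m ^ α * (ν j * z ^ j))
        = fun j => b j * z ^ j := by
      funext j
      rw [hbdef]
      ring
    rw [he2] at h3
    convert h3 using 1
    ring
  have hAeq : A = b := by
    apply coeff_unique
    · intro j
      exact tsum_nonneg fun i => mul_nonneg (hν0' i) (convPow_nonneg hq0 i j)
    · intro j
      refine add_nonneg ?_ (mul_nonneg hmα0 (hν0' j))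
      split
      · linarith
      · exact le_refl 0
    · have h := ((hstep6 1 h1Icc).2).summable
      refine h.congr fun j => by rw [one_pow, mul_one]
    · have h := (hbHasSum 1 h1Icc).summable
      refine h.congr fun j => by rw [one_pow, mul_one]
    · intro z hz
      have hIcc : z ∈ Set.Icc (0:ℝ) 1 := ⟨hz.1.le, hz.2.le⟩
      rw [(hstep6 z hIcc).2.tsum_eq, (hbHasSum z hIcc).tsum_eq, hval z hIcc]
  have hAj : ∀ j : ℕ, 1 ≤ j → A j = m ^ α * ν j := by
    intro j hj
    have hj0 : j ≠ 0 := by omega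
    have h := congrFun hAeq j
    rw [h, hbdef]
    simp [hj0]
  refine ⟨ν, hν0', hν00', hνsum1, hG, hν0', hν00', fun j hj => ⟨hAsummable j, ?_⟩⟩
  show A j = m ^ α * ν j
  exact hAj j hj
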